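/- Let k >= 4 and let H be a 3-uniform hypergraph on n vertices with minimum positive co-degree strictly greater than ((k-1)/(2k-1))n. If H contains a copy of J_k, then H contains at least one of K_4^3, F_{3,2}, or J_{k+1}. -/

import Mathlib

open Finset

private lemma card3' {α : Type*} [DecidableEq α] {a b c : α} (hab : a ≠ b) (hac : a ≠ c)
    (hbc : b ≠ c) : ({a, b, c} : Finset α).card = 3 := by
  rw [card_insert_of_notMem (by simp [hab, hac]),
    card_insert_of_notMem (by simp [hbc]), card_singleton]

private lemma card5' {α : Type*} [DecidableEq α] {a b c d e : α}
    (h1 : a ≠ b) (h2 : a ≠ c) (h3 : a ≠ d) (h4 : a ≠ e) (h5 : b ≠ c) (h6 : b ≠ d)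
    (h7 : b ≠ e) (h8 : c ≠ d) (h9 : c ≠ e) (h10 : d ≠ e) :
    ({a, b, c, d, e} : Finset α).card = 5 := by
  rw [card_insert_of_notMem (by simp [h1, h2, h3, h4]),
    card_insert_of_notMem (by simp [h5, h6, h7]),
    card_insert_of_notMem (by simp [h8, h9]),
    card_insert_of_notMem (by simp [h10]), card_singleton]

private lemma codeg_le_third {n : ℕ} (H : Finset (Finset (Fin n)))
    (huniform : ∀ e ∈ H, e.card = 3) (x y : Fin n) (hxy : x ≠ y) :
    (H.filter (fun e => x ∈ e ∧ y ∈ e)).card ≤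
      (univ.filter (fun z => z ≠ x ∧ z ≠ y ∧ ({x, y, z} : Finset (Fin n)) ∈ H)).card := by
  set f : Finset (Fin n) → Fin n := fun e =>
    if h : ((e.erase x).erase y).Nonempty then ((e.erase x).erase y).min' h else x with hf
  have key : ∀ e ∈ H.filter (fun e => x ∈ e ∧ y ∈ e),
      f e ≠ x ∧ f e ≠ y ∧ e = {x, y, f e} := by
    intro e he
    rw [mem_filter] at he
    obtain ⟨heH, hx, hy⟩ := he
    have hcard : e.card = 3 := huniform e heH
    have hy' : y ∈ e.erase x := mem_erase.mpr ⟨hxy.symm, hy⟩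
    have hc1 : ((e.erase x).erase y).card = 1 := by
      rw [card_erase_of_mem hy', card_erase_of_mem hx, hcard]
    have hne : ((e.erase x).erase y).Nonempty := by
      rw [← card_pos, hc1]; norm_num
    have hzmem : f e ∈ (e.erase x).erase y := by
      rw [hf]; simp only [dif_pos hne]; exact min'_mem _ hne
    have h1 := mem_erase.mp hzmem
    have h2 := mem_erase.mp h1.2
    refine ⟨h2.1, h1.1, ?_⟩
    have hsub : ({x, y, f e} : Finset (Fin n)) ⊆ e := by
      intro w hw
      simp only [mem_insert, mem_singleton] at hw
      rcases hw with rfl | rfl | rfl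
      · exact hx
      · exact hy
      · exact h2.2
    have hc3 : ({x, y, f e} : Finset (Fin n)).card = 3 :=
      card3' hxy h2.1.symm h1.1.symm
    exact (eq_of_subset_of_card_le hsub (by rw [hc3, hcard])).symm
  apply card_le_card_of_injOn f
  · intro e he
    obtain ⟨hzx, hzy, hEq⟩ := key e he
    simp only [mem_coe, mem_filter, mem_univ, true_and]
    refine ⟨hzx, hzy, ?_⟩
    rw [← hEq]
    exact (mem_filter.mp he).1
  · intro e he e' he' hEq
    rw [(key e he).2.2, (key e' he').2.2, hEq]

private def gseq {β : Type*} [DecidableEq β] (A : ℕ → Finset β) (u0 : Finset β) : ℕ → Finset β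
  | 0 => u0
  | r + 1 => gseq A u0 r ∩ A (r + 1)

/-- For `k ≥ 4`, a 3-graph on `n` vertices with minimum positive
co-degree greater than `((k-1)/(2k-1))n` that contains `J_k` must contain
`K_4^3`, `F_{3,2}`, or `J_{k+1}`. -/
theorem stmt_3 (k n : ℕ) (hk : 4 ≤ k) (H : Finset (Finset (Fin n)))
    (huniform : ∀ e ∈ H, e.card = 3)
    (hcodeg : ∀ x y : Fin n, x ≠ y → (∃ e ∈ H, x ∈ e ∧ y ∈ e) →
      (((k : ℝ) - 1) / (2 * (k : ℝ) - 1)) * n <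
        ((H.filter (fun e => x ∈ e ∧ y ∈ e)).card : ℝ))
    (hJk : ∃ v : Fin (k + 1) → Fin n, Function.Injective v ∧
      ∀ i j : Fin (k + 1), 0 < i → i < j → ({v 0, v i, v j} : Finset (Fin n)) ∈ H) :
    -- K_4^3
    (∃ p q s t : Fin n, ({p, q, s, t} : Finset (Fin n)).card = 4 ∧
      ({p, q, s} : Finset (Fin n)) ∈ H ∧ ({p, q, t} : Finset (Fin n)) ∈ H ∧
      ({p, s, t} : Finset (Fin n)) ∈ H ∧ ({q, s, t} : Finset (Fin n)) ∈ H) ∨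
    -- F_{3,2}
    (∃ p q s t u : Fin n, ({p, q, s, t, u} : Finset (Fin n)).card = 5 ∧
      ({p, q, s} : Finset (Fin n)) ∈ H ∧ ({p, q, t} : Finset (Fin n)) ∈ H ∧
      ({p, q, u} : Finset (Fin n)) ∈ H ∧ ({s, t, u} : Finset (Fin n)) ∈ H) ∨
    -- J_{k+1}
    (∃ v : Fin (k + 2) → Fin n, Function.Injective v ∧
      ∀ i j : Fin (k + 2), 0 < i → i < j → ({v 0, v i, v j} : Finset (Fin n)) ∈ H) := by
  by_contra hcon
  push_neg at hcon
  obtain ⟨hK4, hF32, hJ⟩ := hcon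
  clear hK4
  obtain ⟨v, hvinj, hvedge⟩ := hJk
  set a : Fin n := v 0 with ha
  have hk1 : 0 < k + 1 := Nat.succ_pos k
  set u : ℕ → Fin n := fun i => v ⟨i % (k + 1), Nat.mod_lt i hk1⟩ with hu
  have hueq : ∀ i, i ≤ k → ∀ (h : i < k + 1), u i = v ⟨i, h⟩ := by
    intro i hi h
    rw [hu]
    exact congrArg v (Fin.ext (Nat.mod_eq_of_lt (by omega)))
  have hu_ne_a : ∀ i, 1 ≤ i → i ≤ k → u i ≠ a := by
    intro i h1 h2 hEq
    rw [hueq i h2 (by omega), ha] at hEq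
    have h := congrArg Fin.val (hvinj hEq)
    simp at h
    omega
  have hu_inj : ∀ i j, 1 ≤ i → i ≤ k → 1 ≤ j → j ≤ k → i ≠ j → u i ≠ u j := by
    intro i j _ hi _ hj hij hEq
    rw [hueq i hi (by omega), hueq j hj (by omega)] at hEq
    have h := congrArg Fin.val (hvinj hEq)
    simp at h
    exact hij h
  have hedge : ∀ i j, 1 ≤ i → i ≤ k → 1 ≤ j → j ≤ k → i ≠ j →
      ({a, u i, u j} : Finset (Fin n)) ∈ H := by
    intro i j h1i h2i h1j h2j hij
    rcases Nat.lt_or_ge i j with h | h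
    · rw [hueq i h2i (by omega), hueq j h2j (by omega), ha]
      exact hvedge ⟨i, by omega⟩ ⟨j, by omega⟩
        (by simp [Fin.lt_def]; omega) (by simp [Fin.lt_def]; omega)
    · have h' : j < i := by omega
      rw [show ({a, u i, u j} : Finset (Fin n)) = {a, u j, u i} by
        rw [Finset.pair_comm (u i) (u j)]]
      rw [hueq i h2i (by omega), hueq j h2j (by omega), ha]
      exact hvedge ⟨j, by omega⟩ ⟨i, by omega⟩
        (by simp [Fin.lt_def]; omega) (by simp [Fin.lt_def]; omega)
  set A : ℕ → Finset (Fin n) := fun i =>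
    univ.filter (fun z => z ≠ a ∧ z ≠ u i ∧ ({a, u i, z} : Finset (Fin n)) ∈ H) with hA
  set N : ℕ → ℕ → Finset (Fin n) := fun i j =>
    univ.filter (fun z => z ≠ u i ∧ z ≠ u j ∧ ({u i, u j, z} : Finset (Fin n)) ∈ H) with hN
  have hAmem : ∀ i z, z ∈ A i ↔
      (z ≠ a ∧ z ≠ u i ∧ ({a, u i, z} : Finset (Fin n)) ∈ H) := by
    intro i z
    rw [hA]
    simp only [mem_filter, mem_univ, true_and]
  have hNmem : ∀ i j z, z ∈ N i j ↔
      (z ≠ u i ∧ z ≠ u j ∧ ({u i, u j, z} : Finset (Fin n)) ∈ H) := by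
    intro i j z
    rw [hN]
    simp only [mem_filter, mem_univ, true_and]
  have hK : (0 : ℝ) < 2 * (k : ℝ) - 1 := by
    have : (4 : ℝ) ≤ (k : ℝ) := by exact_mod_cast hk
    linarith
  have hcard_gen : ∀ x y : Fin n, x ≠ y → (∃ e ∈ H, x ∈ e ∧ y ∈ e) →
      ((k : ℝ) - 1) * n <
        ((univ.filter (fun z => z ≠ x ∧ z ≠ y ∧ ({x, y, z} : Finset (Fin n)) ∈ H)).card : ℝ) *
          (2 * (k : ℝ) - 1) := by
    intro x y hxy hex
    have h1 := hcodeg x y hxy hex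
    rw [div_mul_eq_mul_div, div_lt_iff₀ hK] at h1
    have h2 := codeg_le_third H huniform x y hxy
    have h2' : ((H.filter (fun e => x ∈ e ∧ y ∈ e)).card : ℝ) ≤
        ((univ.filter (fun z => z ≠ x ∧ z ≠ y ∧ ({x, y, z} : Finset (Fin n)) ∈ H)).card : ℝ) :=
      Nat.cast_le.mpr h2
    nlinarith [mul_le_mul_of_nonneg_right h2' hK.le]
  have hcardA : ∀ i, 1 ≤ i → i ≤ k →
      ((k : ℝ) - 1) * n < ((A i).card : ℝ) * (2 * (k : ℝ) - 1) := by
    intro i h1 h2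
    have hane : a ≠ u i := (hu_ne_a i h1 h2).symm
    rw [hA]
    rcases eq_or_ne i 1 with rfl | hne1
    · exact hcard_gen a (u 1) hane
        ⟨{a, u 1, u 2}, hedge 1 2 le_rfl (by omega) (by omega) (by omega) (by omega),
          by simp, by simp⟩
    · exact hcard_gen a (u i) hane
        ⟨{a, u i, u 1}, hedge i 1 h1 h2 le_rfl (by omega) hne1,
          by simp, by simp⟩
  have hcardN : ∀ i j, 1 ≤ i → i ≤ k → 1 ≤ j → j ≤ k → i ≠ j →
      ((k : ℝ) - 1) * n < ((N i j).card : ℝ) * (2 * (k : ℝ) - 1) := by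
    intro i j h1i h2i h1j h2j hij
    rw [hN]
    exact hcard_gen (u i) (u j) (hu_inj i j h1i h2i h1j h2j hij)
      ⟨{a, u i, u j}, hedge i j h1i h2i h1j h2j hij, by simp, by simp⟩
  have hdisj : ∀ i j l, 1 ≤ i → i ≤ k → 1 ≤ j → j ≤ k → 1 ≤ l → l ≤ k →
      i ≠ j → i ≠ l → j ≠ l → ∀ z, z ∈ A i → z ∉ N j l := by
    intro i j l h1i h2i h1j h2j h1l h2l hij hil hjl z hzA hzN
    rw [hAmem] at hzA
    rw [hNmem] at hzN
    obtain ⟨hza, hzui, hzedge⟩ := hzA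
    obtain ⟨hzuj, hzul, hzedge2⟩ := hzN
    have hcard5 : ({a, u i, u j, u l, z} : Finset (Fin n)).card = 5 :=
      card5' (hu_ne_a i h1i h2i).symm (hu_ne_a j h1j h2j).symm (hu_ne_a l h1l h2l).symm
        hza.symm (hu_inj i j h1i h2i h1j h2j hij) (hu_inj i l h1i h2i h1l h2l hil)
        hzui.symm (hu_inj j l h1j h2j h1l h2l hjl) hzuj.symm hzul.symm
    exact hF32 a (u i) (u j) (u l) z hcard5
      (hedge i j h1i h2i h1j h2j hij) (hedge i l h1i h2i h1l h2l hil) hzedge hzedge2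
  have hgs : ∀ r, gseq A univ (r + 1) = gseq A univ r ∩ A (r + 1) := by
    intro r
    simp [gseq]
  have hgmem : ∀ r z, z ∈ gseq A univ r → ∀ i, 1 ≤ i → i ≤ r → z ∈ A i := by
    intro r
    induction r with
    | zero => intro z _ i h1 h2; omega
    | succ m ih =>
      intro z hz i h1 h2
      rw [hgs m, mem_inter] at hz
      rcases Nat.lt_or_ge i (m + 1) with h | h
      · exact ih z hz.1 i h1 (by omega)
      · have hi : i = m + 1 := by omega
        subst hi
        exact hz.2
  have main : ∀ r, 1 ≤ r → r ≤ k →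
      ((k : ℝ) - r) * n < ((gseq A univ r).card : ℝ) * (2 * (k : ℝ) - 1) := by
    intro r
    induction r with
    | zero => intro h _; omega
    | succ m ih =>
      intro _ h2
      rcases Nat.eq_zero_or_pos m with rfl | hm
      · rw [hgs 0, show gseq A univ 0 = univ from rfl, univ_inter]
        have h := hcardA 1 le_rfl (by omega)
        push_cast
        push_cast at h
        linarith
      · have ihm := ih hm (by omega)
        obtain ⟨p, q, hp1, hpk, hq1, hqk, hpq, hp2, hq2, hp3, hq3⟩ :
            ∃ p q : ℕ, 1 ≤ p ∧ p ≤ k ∧ 1 ≤ q ∧ q ≤ k ∧ p ≠ q ∧ p ≠ 1 ∧ q ≠ 1 ∧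
              p ≠ m + 1 ∧ q ≠ m + 1 := by
          by_cases hA2 : m + 1 = 2
          · exact ⟨3, 4, by omega, by omega, by omega, by omega, by omega, by omega,
              by omega, by omega, by omega⟩
          · by_cases hA3 : m + 1 = 3
            · exact ⟨2, 4, by omega, by omega, by omega, by omega, by omega, by omega,
                by omega, by omega, by omega⟩
            · exact ⟨2, 3, by omega, by omega, by omega, by omega, by omega, by omega,
                by omega, by omega, by omega⟩
        have hdisjU : Disjoint (gseq A univ m ∪ A (m + 1)) (N p q) := by
          rw [disjoint_left]
          intro z hz
          rcases mem_union.mp hz with h | h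
          · exact hdisj 1 p q le_rfl (by omega) hp1 hpk hq1 hqk (Ne.symm hp2) (Ne.symm hq2)
              hpq z (hgmem m z h 1 le_rfl hm)
          · exact hdisj (m + 1) p q (by omega) h2 hp1 hpk hq1 hqk (Ne.symm hp3) (Ne.symm hq3)
              hpq z h
        have hcount1 : (gseq A univ m ∪ A (m + 1)).card + (N p q).card ≤ n := by
          have h1 := card_le_univ ((gseq A univ m ∪ A (m + 1)) ∪ N p q)
          rw [card_union_of_disjoint hdisjU] at h1
          simpa using h1
        have hcount2 := card_union_add_card_inter (gseq A univ m) (A (m + 1))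
        have hAc := hcardA (m + 1) (by omega) h2
        have hNc := hcardN p q hp1 hpk hq1 hqk hpq
        rw [hgs m]
        have c1 : ((gseq A univ m ∪ A (m + 1)).card : ℝ) + ((N p q).card : ℝ) ≤ (n : ℝ) := by
          exact_mod_cast hcount1
        have c2 : ((gseq A univ m ∪ A (m + 1)).card : ℝ) +
            ((gseq A univ m ∩ A (m + 1)).card : ℝ)
            = ((gseq A univ m).card : ℝ) + ((A (m + 1)).card : ℝ) := by
          exact_mod_cast hcount2
        have e1 : ((gseq A univ m).card : ℝ) + ((A (m + 1)).card : ℝ) + ((N p q).card : ℝ)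
            - (n : ℝ) ≤ ((gseq A univ m ∩ A (m + 1)).card : ℝ) := by linarith
        have e2 := mul_le_mul_of_nonneg_right e1 hK.le
        have e3 : (((gseq A univ m).card : ℝ) + ((A (m + 1)).card : ℝ) + ((N p q).card : ℝ)
            - (n : ℝ)) * (2 * (k : ℝ) - 1)
            = ((gseq A univ m).card : ℝ) * (2 * (k : ℝ) - 1)
              + ((A (m + 1)).card : ℝ) * (2 * (k : ℝ) - 1)
              + ((N p q).card : ℝ) * (2 * (k : ℝ) - 1)
              - (n : ℝ) * (2 * (k : ℝ) - 1) := by ring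
        rw [e3] at e2
        push_cast
        push_cast at ihm
        linarith
  have hfin := main k (by omega) le_rfl
  have h0 : (0 : ℝ) < ((gseq A univ k).card : ℝ) * (2 * (k : ℝ) - 1) := by
    have hz : ((k : ℝ) - (k : ℕ)) * n = 0 := by push_cast; ring
    linarith
  have hcpos : 0 < (gseq A univ k).card := by
    by_contra hc
    push_neg at hc
    have hc2 : (gseq A univ k).card = 0 := by omega
    rw [hc2] at h0
    norm_num at h0
  obtain ⟨z, hz⟩ := card_pos.mp hcpos
  have hzA : ∀ i, 1 ≤ i → i ≤ k →
      z ≠ a ∧ z ≠ u i ∧ ({a, u i, z} : Finset (Fin n)) ∈ H := by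
    intro i h1 h2
    have := hgmem k z hz i h1 h2
    rwa [hAmem] at this
  have hz_ne_v : ∀ t : Fin (k + 1), z ≠ v t := by
    intro t
    rcases Nat.eq_zero_or_pos (t : ℕ) with h0' | hpos'
    · have ht : t = 0 := Fin.ext (by simpa using h0')
      rw [ht, ← ha]
      exact (hzA 1 le_rfl (by omega)).1
    · have h2 : (t : ℕ) ≤ k := by omega
      have hne := (hzA (t : ℕ) hpos' h2).2.1
      rw [hueq (t : ℕ) h2 (by omega)] at hne
      have : (⟨(t : ℕ), by omega⟩ : Fin (k + 1)) = t := Fin.ext rfl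
      rwa [this] at hne
  set w : Fin (k + 2) → Fin n := fun i => if h : (i : ℕ) < k + 1 then v ⟨(i : ℕ), h⟩ else z
    with hw
  have hw_lt : ∀ (i : Fin (k + 2)) (h : (i : ℕ) < k + 1), w i = v ⟨(i : ℕ), h⟩ := by
    intro i h
    rw [hw]
    simp only [dif_pos h]
  have hw_last : ∀ (i : Fin (k + 2)), (i : ℕ) = k + 1 → w i = z := by
    intro i h
    rw [hw]
    simp only [h]
    simp
  have hwinj : Function.Injective w := by
    intro i j hEq
    rcases Nat.lt_or_ge ((i : ℕ)) (k + 1) with hi | hi <;>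
      rcases Nat.lt_or_ge ((j : ℕ)) (k + 1) with hj | hj
    · rw [hw_lt i hi, hw_lt j hj] at hEq
      have h := congrArg Fin.val (hvinj hEq)
      simp at h
      exact Fin.ext h
    · have hj' : (j : ℕ) = k + 1 := by have := j.isLt; omega
      rw [hw_lt i hi, hw_last j hj'] at hEq
      exact absurd hEq.symm (hz_ne_v _)
    · have hi' : (i : ℕ) = k + 1 := by have := i.isLt; omega
      rw [hw_last i hi', hw_lt j hj] at hEq
      exact absurd hEq (hz_ne_v _)
    · have hi' : (i : ℕ) = k + 1 := by have := i.isLt; omega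
      have hj' : (j : ℕ) = k + 1 := by have := j.isLt; omega
      exact Fin.ext (by omega)
  obtain ⟨i, j, hi0, hij, hnedge⟩ := hJ w hwinj
  apply hnedge
  have hw0 : w 0 = a := by
    rw [hw_lt 0 (by simp), ha]
    exact congrArg v (Fin.ext (by simp))
  have hi1 : 1 ≤ (i : ℕ) := by
    have h := Fin.lt_def.mp hi0
    rw [Fin.val_zero] at h; omega
  have hijv : (i : ℕ) < (j : ℕ) := Fin.lt_def.mp hij
  rcases Nat.lt_or_ge ((j : ℕ)) (k + 1) with hj | hj
  · rw [hw0, hw_lt i (by omega), hw_lt j hj, ha]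
    exact hvedge ⟨(i : ℕ), by omega⟩ ⟨(j : ℕ), hj⟩
      (by rw [Fin.lt_def, Fin.val_zero]; exact hi1) (Fin.mk_lt_mk.mpr hijv)
  · have hj' : (j : ℕ) = k + 1 := by have := j.isLt; omega
    rw [hw0, hw_lt i (by omega), hw_last j hj']
    have h2 : (i : ℕ) ≤ k := by omega
    have hEd := (hzA (i : ℕ) hi1 h2).2.2
    rw [hueq (i : ℕ) h2 (by omega)] at hEd
    exact hEd
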